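/- Let σ be a deductive JSBAF semantics. Then Deductive ASPIC− satisfies closure under σ: for every argumentation system AS = (R_s, R_d, n) and every set C of DA− conclusions of AS under σ, the closure of C under the strict rules R_s equals C. -/

import Mathlib

/-- Arguments: built by applying a rule (strict if the Bool is `true`, defeasible
if `false`) to a list of immediate sub-arguments, yielding a conclusion. -/
inductive Arg (L : Type) : Type where
  | node : Bool → List (Arg L) → L → Arg L

/-- The conclusion of an argument. -/
def Arg.conc {L : Type} : Arg L → L
  | .node _ _ φ => φ

/-- Arguments on the basis of an argumentation system with strict rules Rs and
defeasible rules Rd (a rule is a pair of a list of antecedents and a consequent). -/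
inductive IsArg {L : Type} (Rs Rd : Set (List L × L)) : Arg L → Prop where
  | strict {subs : List (Arg L)} {φ : L} :
      (subs.map Arg.conc, φ) ∈ Rs → (∀ A ∈ subs, IsArg Rs Rd A) →
      IsArg Rs Rd (.node true subs φ)
  | defeasible {subs : List (Arg L)} {φ : L} :
      (subs.map Arg.conc, φ) ∈ Rd → (∀ A ∈ subs, IsArg Rs Rd A) →
      IsArg Rs Rd (.node false subs φ)

/-- An argument is strict iff it uses only strict rules (DefRules(A) = ∅). -/
inductive Arg.Strict {L : Type} : Arg L → Prop where
  | node {subs : List (Arg L)} {φ : L} :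
      (∀ A ∈ subs, Arg.Strict A) → Arg.Strict (.node true subs φ)

/-- Sub-argument relation: `Arg.SubArg B A` means B ∈ Sub(A). -/
inductive Arg.SubArg {L : Type} : Arg L → Arg L → Prop where
  | refl (A : Arg L) : Arg.SubArg A A
  | step {B A : Arg L} {b : Bool} {subs : List (Arg L)} {φ : L} :
      A ∈ subs → Arg.SubArg B A → Arg.SubArg B (.node b subs φ)

/-- φ = −ψ : φ = ¬ψ or ψ = ¬φ. -/
def IsNeg {L : Type} (neg : L → L) (φ ψ : L) : Prop := φ = neg ψ ∨ ψ = neg φ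

/-- A unrestrictedly rebuts B iff Conc(A) = −Conc(B') for a defeasible B' ∈ Sub(B). -/
def Rebuts {L : Type} (neg : L → L) (A B : Arg L) : Prop :=
  ∃ B', Arg.SubArg B' B ∧ ¬ B'.Strict ∧ IsNeg neg A.conc B'.conc

/-- A undercuts B iff Conc(A) = −n(r) for some B' ∈ Sub(B) with defeasible top rule r. -/
def Undercuts {L : Type} (neg : L → L) (n : List L × L → Option L) (A B : Arg L) : Prop :=
  ∃ (subs : List (Arg L)) (φ ψ : L), Arg.SubArg (Arg.node false subs φ) B ∧
    n (subs.map Arg.conc, φ) = some ψ ∧ IsNeg neg A.conc ψ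

/-- The attack relation of (Deductive) ASPIC−: undercut or unrestricted rebuttal. -/
def Attacks {L : Type} (neg : L → L) (n : List L × L → Option L) (A B : Arg L) : Prop :=
  Undercuts neg n A B ∨ Rebuts neg A B

/-- An argumentation system is consistent iff there are no strict arguments A, B
on its basis with Conc(A) = −Conc(B). -/
def ConsistentAS {L : Type} (neg : L → L) (Rs Rd : Set (List L × L)) : Prop :=
  ¬ ∃ A B : Arg L, IsArg Rs Rd A ∧ IsArg Rs Rd B ∧ A.Strict ∧ B.Strict ∧
      IsNeg neg A.conc B.conc

/-- Cl_{R_s}(C): the smallest superset of C closed under the strict rules. -/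
inductive Cl {L : Type} (Rs : Set (List L × L)) (C : Set L) : L → Prop where
  | base {φ : L} : φ ∈ C → Cl Rs C φ
  | rule {l : List L} {φ : L} : (l, φ) ∈ Rs → (∀ a ∈ l, Cl Rs C a) → Cl Rs C φ

/-- The set of arguments of the JSBAF J_DA−(AS). -/
def DAArgs {L : Type} (Rs Rd : Set (List L × L)) : Set (Arg L) := {A | IsArg Rs Rd A}

/-- The deductive joint support relation of Deductive ASPIC−:
(S, A) ∈ ⇒' iff A is of the form S ↦ φ (an argument with strict top rule whose
set of immediate sub-arguments is S). -/
def DASup {L : Type} (Rs Rd : Set (List L × L)) (S : Set (Arg L)) (A : Arg L) : Prop :=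
  IsArg Rs Rd A ∧ ∃ (subs : List (Arg L)) (φ : L),
    A = Arg.node true subs φ ∧ S = {B | B ∈ subs}

/-- A JSBAF semantics σ (here over the arguments of type `Arg L`, taking the
argument set Ar, attack relation and joint support relation of a JSBAF to its set
of extensions, each a subset of Ar) is deductive iff extensions are closed under
the joint support relation.  If σ is deductive, then Deductive ASPIC− satisfies
closure under σ: every set C of DA− conclusions of an argumentation system
AS = (Rs, Rd, n) under σ satisfies Cl_{R_s}(C) = C. -/
theorem da_closure {L : Type} (neg : L → L) (Rs Rd : Set (List L × L))
    (n : List L × L → Option L)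
    (σ : Set (Arg L) → (Arg L → Arg L → Prop) → (Set (Arg L) → Arg L → Prop) →
      Set (Set (Arg L)))
    (hExt : ∀ (Ar : Set (Arg L)) (att : Arg L → Arg L → Prop)
      (sup : Set (Arg L) → Arg L → Prop), ∀ E ∈ σ Ar att sup, E ⊆ Ar)
    (hDeductive : ∀ (Ar : Set (Arg L)) (att : Arg L → Arg L → Prop)
      (sup : Set (Arg L) → Arg L → Prop), ∀ E ∈ σ Ar att sup,
      ∀ S ⊆ E, ∀ A, sup S A → A ∈ E)
    (E : Set (Arg L)) (hE : E ∈ σ (DAArgs Rs Rd) (Attacks neg n) (DASup Rs Rd))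
    (C : Set L) (hC : C = {φ | ∃ A ∈ E, A.conc = φ}) :
    ∀ φ, Cl Rs C φ ↔ φ ∈ C := by
  intro φ
  constructor
  · intro h
    induction h with
    | base h => exact h
    | rule hr hall ih =>
      rename_i l ψ
      -- build a list of arguments in E with conclusions l
      have hargs : ∃ subs : List (Arg L), subs.map Arg.conc = l ∧ ∀ B ∈ subs, B ∈ E := by
        clear hr hall
        induction l with
        | nil => exact ⟨[], rfl, by simp⟩
        | cons a t iht =>
          obtain ⟨subs, hmap, hmem⟩ := iht (fun x hx => ih x (List.mem_cons_of_mem _ hx))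
          have ha : a ∈ C := ih a List.mem_cons_self
          rw [hC] at ha
          obtain ⟨A, hAE, hAc⟩ := ha
          exact ⟨A :: subs, by simp [hmap, hAc], by
            intro B hB; rcases List.mem_cons.mp hB with h | h
            · exact h ▸ hAE
            · exact hmem B h⟩
      obtain ⟨subs, hmap, hmem⟩ := hargs
      have hsubarg : ∀ B ∈ subs, IsArg Rs Rd B := fun B hB =>
        hExt _ _ _ E hE (hmem B hB)
      have hIsArg : IsArg Rs Rd (Arg.node true subs ψ) :=
        IsArg.strict (hmap ▸ hr) hsubarg
      have hsup : DASup Rs Rd {B | B ∈ subs} (Arg.node true subs ψ) :=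
        ⟨hIsArg, subs, ψ, rfl, rfl⟩
      have hInE : Arg.node true subs ψ ∈ E :=
        hDeductive _ _ _ E hE _ (fun B hB => hmem B hB) _ hsup
      rw [hC]
      exact ⟨_, hInE, rfl⟩
  · exact Cl.base
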